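/- Suppose that n ≥ 4k and k ≥ 3. Then d_2^max(C_n^k) ≤ k + (k+1)k²/n, i.e. every subgraph H of C_n^k with at least 3 vertices satisfies e_H/(v_H − 2) ≤ k + (k+1)k²/n. -/

import Mathlib

namespace RandomGraphs

/-- The `k`-th power of a graph: two vertices are adjacent iff their distance in `G`
is positive (they are distinct and reachable from each other) and at most `k`. -/
def graphPow {V : Type*} (G : SimpleGraph V) (k : ℕ) : SimpleGraph V where
  Adj u v := u ≠ v ∧ G.Reachable u v ∧ G.dist u v ≤ k
  symm := by
    constructor; intro u v h
    exact ⟨h.1.symm, h.2.1.symm, by rw [SimpleGraph.dist_comm]; exact h.2.2⟩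
  loopless := by constructor; intro v h; exact h.1 rfl

end RandomGraphs

open RandomGraphs

section Aux
open scoped Fin.NatCast Fin.CommRing
set_option linter.unusedSectionVars false
set_option linter.unusedVariables false


theorem neg_val_fact (n : ℕ) [NeZero n] (a : Fin n) :
    a.val + (-a).val = 0 ∨ a.val + (-a).val = n := by
  have hn : 0 < n := Nat.pos_of_ne_zero (NeZero.ne n)
  have h : (-a).val = (n - a.val) % n := rfl
  rcases Nat.eq_zero_or_pos a.val with h0 | h0
  · left; rw [h, h0, Nat.sub_zero, Nat.mod_self]
  · right; rw [h, Nat.mod_eq_of_lt (by omega)]; have := a.isLt; omega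

theorem add_val_fact (n : ℕ) [NeZero n] (a b : Fin n) :
    (a + b).val = a.val + b.val ∨ (a + b).val + n = a.val + b.val := by
  have h : (a + b).val = (a.val + b.val) % n := Fin.val_add a b
  have ha := a.isLt; have hb := b.isLt
  rcases Nat.lt_or_ge (a.val + b.val) n with hl | hl
  · left; rw [h, Nat.mod_eq_of_lt hl]
  · right; rw [h, Nat.mod_eq_sub_mod hl, Nat.mod_eq_of_lt (by omega)]; omega

theorem subadd (n : ℕ) [NeZero n] (a b : Fin n) :
    min (a + b).val (-(a+b)).val ≤ min a.val (-a).val + min b.val (-b).val := by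
  have h1 := neg_val_fact n a
  have h2 := neg_val_fact n b
  have h3 := neg_val_fact n (a + b)
  have h4 := add_val_fact n a b
  have := a.isLt; have := b.isLt; have := (a+b).isLt
  have := (-a).isLt; have := (-b).isLt; have := (-(a+b)).isLt
  omega



theorem walk_bound {n : ℕ} [NeZero n] :
    ∀ {u v : Fin n} (w : (SimpleGraph.cycleGraph n).Walk u v),
      min (v - u).val (u - v).val ≤ w.length := by
  intro u v w
  induction w with
  | nil => simp
  | @cons u u' v h w ih =>
    rw [SimpleGraph.cycleGraph_adj'] at h
    have key : min (v - u).val (u - v).val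
        ≤ min (v - u').val (u' - v).val + min (u' - u).val (u - u').val := by
      have := subadd n (v - u') (u' - u)
      have e1 : (v - u') + (u' - u) = v - u := by ring
      have e2 : -(v - u) = u - v := by ring
      have e3 : -(v - u') = u' - v := by ring
      have e4 : -(u' - u) = u - u' := by ring
      rw [e1, e2, e3, e4] at this
      omega
    have h1 : min (u' - u).val (u - u').val ≤ 1 := by omega
    simp only [SimpleGraph.Walk.length_cons]
    omega

theorem dist_bound {n k : ℕ} [NeZero n] {u v : Fin n}
    (hr : (SimpleGraph.cycleGraph n).Reachable u v)
    (hd : (SimpleGraph.cycleGraph n).dist u v ≤ k) :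
    min (v - u).val (u - v).val ≤ k := by
  obtain ⟨w, hw⟩ := hr.exists_walk_length_eq_dist
  have := walk_bound w
  omega


theorem pair_finset_eq {α : Type*} [DecidableEq α] {u v u' v' : α} (hu : u ≠ v)
    (h : ({u, v} : Finset α) = {u', v'}) : s(u, v) = s(u', v') := by
  have h1 : u ∈ ({u', v'} : Finset α) := h ▸ (Finset.mem_insert_self u {v})
  have h2 : v ∈ ({u', v'} : Finset α) := h ▸ (by simp)
  have h3 : u' ∈ ({u, v} : Finset α) := h ▸ (Finset.mem_insert_self u' {v'})
  have h4 : v' ∈ ({u, v} : Finset α) := h ▸ (by simp)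
  simp only [Finset.mem_insert, Finset.mem_singleton] at h1 h2 h3 h4
  rw [Sym2.eq_iff]
  rcases h1 with rfl | rfl <;> rcases h2 with rfl | rfl <;> tauto

noncomputable def f2 {α : Type*} [DecidableEq α] : Sym2 α → Finset α :=
  Sym2.lift ⟨fun u v => {u, v}, fun u v => Finset.pair_comm u v⟩

theorem f2_inj {α : Type*} [DecidableEq α] :
    ∀ e e' : Sym2 α, ¬ e.IsDiag → f2 e = f2 e' → e = e' := by
  intro e e'
  induction e with
  | _ u v =>
    induction e' with
    | _ u' v' =>
      intro hd h
      exact pair_finset_eq (by simpa using hd) h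

theorem edge_card_le_choose {V : Type*} [DecidableEq V] {G : SimpleGraph V}
    (H : G.Subgraph) (hfe : H.edgeSet.Finite) (T : Finset V) (hT : ∀ x ∈ H.verts, x ∈ T) :
    hfe.toFinset.card ≤ T.card.choose 2 := by
  rw [← Finset.card_powersetCard]
  apply Finset.card_le_card_of_injOn f2
  · intro e he
    rw [Finset.mem_coe, Set.Finite.mem_toFinset] at he
    induction e with
    | _ u v =>
      have hadj : H.Adj u v := he
      have hne : u ≠ v := hadj.ne
      show ({u, v} : Finset V) ∈ _
      rw [Finset.mem_coe, Finset.mem_powersetCard]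
      constructor
      · intro x hx
        simp only [Finset.mem_insert, Finset.mem_singleton] at hx
        rcases hx with rfl | rfl
        · exact hT _ hadj.fst_mem
        · exact hT _ hadj.snd_mem
      · rw [Finset.card_pair hne]
  · intro e he e' he' heq
    have he2 : e ∈ H.edgeSet := by simpa using he
    exact f2_inj e e' (G.not_isDiag_of_mem_edgeSet (H.edgeSet_subset he2)) heq


section Core
variable {n : ℕ} [NeZero n]

theorem natCast_fin_inj {i j : ℕ} (hi : i < n) (hj : j < n) (h : (i : Fin n) = j) : i = j := by
  have := congrArg Fin.val h
  rwa [Fin.val_natCast, Fin.val_natCast, Nat.mod_eq_of_lt hi, Nat.mod_eq_of_lt hj] at this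

theorem natCast_fin_ne_zero {i : ℕ} (h1 : 1 ≤ i) (h2 : i < n) : (i : Fin n) ≠ 0 := by
  intro h
  have := natCast_fin_inj h2 (Nat.pos_of_ne_zero (NeZero.ne n)) (by simpa using h)
  omega

theorem sub_nat_cast {i j : ℕ} (h : i ≤ j) : ((j - i : ℕ) : Fin n) = (j : Fin n) - i :=
  Nat.cast_sub h

/-- minimal backward distance from x to T -/
theorem exists_min_back (T : Finset (Fin n)) (hT : T.Nonempty) {x : Fin n} (hx : x ∉ T) :
    ∃ j : ℕ, 1 ≤ j ∧ x - (j : Fin n) ∈ T ∧ ∀ i : ℕ, 1 ≤ i → i < j → x - (i : Fin n) ∉ T := by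
  obtain ⟨t, ht⟩ := hT
  have hex : ∃ j : ℕ, 1 ≤ j ∧ x - (j : Fin n) ∈ T := by
    refine ⟨(x - t).val, ?_, ?_⟩
    · have : x - t ≠ 0 := by
        intro h; rw [sub_eq_zero] at h; exact hx (h ▸ ht)
      have : (x - t).val ≠ 0 := fun h => this (Fin.ext (by rw [h]; simp))
      omega
    · rw [Fin.cast_val_eq_self, sub_sub_cancel]; exact ht
  classical
  refine ⟨Nat.find hex, (Nat.find_spec hex).1, (Nat.find_spec hex).2, fun i h1 h2 hmem => ?_⟩
  exact Nat.find_min hex h2 ⟨h1, hmem⟩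

theorem exists_min_fwd (T : Finset (Fin n)) {y : Fin n} (hy : y ∉ T) {s : Fin n} (hs : s ∈ T) :
    ∃ j : ℕ, 1 ≤ j ∧ s + (j : Fin n) ∉ T ∧ ∀ i : ℕ, 1 ≤ i → i < j → s + (i : Fin n) ∈ T := by
  have hex : ∃ j : ℕ, 1 ≤ j ∧ s + (j : Fin n) ∉ T := by
    refine ⟨(y - s).val, ?_, ?_⟩
    · have : y - s ≠ 0 := by
        intro h; rw [sub_eq_zero] at h; exact hy (h ▸ hs)
      have : (y - s).val ≠ 0 := fun h => this (Fin.ext (by rw [h]; simp))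
      omega
    · rw [Fin.cast_val_eq_self, add_sub_cancel]; exact hy
  classical
  refine ⟨Nat.find hex, (Nat.find_spec hex).1, (Nat.find_spec hex).2, fun i h1 h2 => ?_⟩
  by_contra hmem
  exact Nat.find_min hex h2 ⟨h1, hmem⟩

end Core

open Finset in
theorem core_bound {n k : ℕ} [NeZero n] (hk : 3 ≤ k) (hn : 4 * k ≤ n)
    (T : Finset (Fin n)) (hv : k + 2 ≤ T.card) (hm : 2 * k ≤ n - T.card) :
    2 * k ≤ ((T ×ˢ Finset.Icc 1 k).filter
      (fun p : Fin n × ℕ => p.1 + ((p.2 : ℕ) : Fin n) ∉ T)).card := by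
  classical
  have hkn : k < n := by omega
  have hn0 : 0 < n := by omega
  set Gset := (T ×ˢ Finset.Icc 1 k).filter
      (fun p : Fin n × ℕ => p.1 + ((p.2 : ℕ) : Fin n) ∉ T) with hGset
  have hTne : T.Nonempty := Finset.card_pos.mp (by omega)
  have hTcard_le : T.card ≤ n := by
    simpa using Finset.card_le_card (Finset.subset_univ T)
  have hTc : ∃ y : Fin n, y ∉ T := by
    by_contra hc
    push_neg at hc
    have : T = Finset.univ := Finset.eq_univ_iff_forall.mpr hc
    rw [this] at hm
    simp at hm
    omega
  by_cases hdeep : ∃ x : Fin n, x ∉ T ∧ ∀ j : ℕ, 1 ≤ j → j ≤ k → x - (j : Fin n) ∉ T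
  · -- deep gap exists
    obtain ⟨x₀, hx₀, hx₀deep⟩ := hdeep
    obtain ⟨js, hjs1, hjsT, hjsmin⟩ := exists_min_back T hTne hx₀
    have hjsk : k < js := by
      by_contra hc
      exact hx₀deep js hjs1 (by omega) hjsT
    set p₀ : Fin n := x₀ - (js : Fin n) with hp₀
    have P0a : p₀ ∈ T := hjsT
    have P0b : ∀ j : ℕ, 1 ≤ j → j ≤ k → p₀ + (j : Fin n) ∉ T := by
      intro j h1 h2
      have hco : p₀ + (j : Fin n) = x₀ - ((js - j : ℕ) : Fin n) := by
        rw [sub_nat_cast (by omega : j ≤ js), hp₀]; ring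
      rw [hco]
      exact hjsmin (js - j) (by omega) (by omega)
    by_cases hrun : ∃ s : Fin n, s ∈ T ∧ ∀ j : ℕ, 1 ≤ j → j ≤ k → s + (j : Fin n) ∈ T
    · -- deep run exists as well
      obtain ⟨s₀, hs₀, hs₀run⟩ := hrun
      obtain ⟨y, hy⟩ := hTc
      obtain ⟨is, his1, hisT, hismin⟩ := exists_min_fwd T hy hs₀
      have hisk : k < is := by
        by_contra hc
        exact hisT (hs₀run is his1 (by omega))
      set p₁ : Fin n := s₀ + ((is - 1 : ℕ) : Fin n) with hp₁
      have P1a : p₁ ∈ T := by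
        rcases Nat.eq_or_lt_of_le his1 with h | h
        · rw [hp₁, ← h]; simpa using hs₀
        · exact hismin (is - 1) (by omega) (by omega)
      have P1b : p₁ + (1 : Fin n) ∉ T := by
        have : p₁ + (1 : Fin n) = s₀ + (is : Fin n) := by
          rw [hp₁, sub_nat_cast (by omega : 1 ≤ is)]; push_cast; ring
        rw [this]; exact hisT
      have P1c : ∀ i : ℕ, i ≤ k - 1 → p₁ - (i : Fin n) ∈ T := by
        intro i hi
        have hco : p₁ - (i : Fin n) = s₀ + ((is - 1 - i : ℕ) : Fin n) := by
          rw [hp₁, sub_nat_cast (by omega : i ≤ is - 1), sub_nat_cast (by omega : 1 ≤ is)]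
          push_cast; ring
        rw [hco]
        rcases Nat.eq_zero_or_pos (is - 1 - i) with h | h
        · rw [h]; simpa using hs₀
        · exact hismin (is - 1 - i) (by omega) (by omega)
      -- families
      by_cases hpp : p₀ = p₁
      · -- p₀ = p₁ : triangle family
        have P0c : ∀ i : ℕ, i ≤ k - 1 → p₀ - (i : Fin n) ∈ T := by
          intro i hi; rw [hpp]; exact P1c i hi
        have P0b1 : p₀ + (1 : Fin n) ∉ T := by
          have h1 : ((1:ℕ) : Fin n) = (1 : Fin n) := by push_cast; rfl
          rw [← h1]; exact P0b 1 le_rfl (by omega)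
        set F₁ := (Finset.Icc 1 k).image (fun j => ((p₀, j) : Fin n × ℕ)) with hF₁
        set F₂ := (Finset.Icc 2 k).image
            (fun i => ((p₀ - ((i - 1 : ℕ) : Fin n), i) : Fin n × ℕ)) with hF₂
        set F₃ : Finset (Fin n × ℕ) := {(p₀ - (1 : Fin n), 3)} with hF₃
        have hsub : F₁ ∪ F₂ ∪ F₃ ⊆ Gset := by
          intro a ha
          simp only [hF₁, hF₂, hF₃, Finset.mem_union, Finset.mem_image,
            Finset.mem_singleton, Finset.mem_Icc] at ha
          rw [hGset, Finset.mem_filter, Finset.mem_product]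
          rcases ha with (⟨j, hj, rfl⟩ | ⟨i, hi, rfl⟩) | rfl
          · exact ⟨⟨P0a, Finset.mem_Icc.mpr ⟨hj.1, hj.2⟩⟩, P0b j hj.1 hj.2⟩
          · refine ⟨⟨P0c (i - 1) (by omega), Finset.mem_Icc.mpr ⟨by omega, hi.2⟩⟩, ?_⟩
            have : p₀ - ((i - 1 : ℕ) : Fin n) + ((i : ℕ) : Fin n) = p₀ + (1 : Fin n) := by
              rw [sub_nat_cast (by omega : 1 ≤ i)]; push_cast; ring
            rw [this]
            exact P0b1
          · refine ⟨⟨by simpa using P0c 1 (by omega), Finset.mem_Icc.mpr ⟨by omega, by omega⟩⟩, ?_⟩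
            have : p₀ - (1 : Fin n) + ((3 : ℕ) : Fin n) = p₀ + ((2 : ℕ) : Fin n) := by
              push_cast; ring
            rw [this]
            exact P0b 2 (by omega) (by omega)
        have hc1 : F₁.card = k := by
          rw [hF₁, Finset.card_image_of_injOn (fun a _ b _ h => by
            simpa using congrArg Prod.snd h)]
          simp [Nat.card_Icc]
        have hc2 : F₂.card = k - 1 := by
          rw [hF₂, Finset.card_image_of_injOn (fun a _ b _ h => by
            simpa using congrArg Prod.snd h)]
          simp [Nat.card_Icc]
        have hd12 : Disjoint F₁ F₂ := by
          rw [Finset.disjoint_left]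
          rintro a ha1 ha2
          simp only [hF₁, hF₂, Finset.mem_image, Finset.mem_Icc] at ha1 ha2
          obtain ⟨j, hj, rfl⟩ := ha1
          obtain ⟨i, hi, hie⟩ := ha2
          have h2 : i = j := by simpa using congrArg Prod.snd hie
          subst h2
          have h1 : p₀ - ((i - 1 : ℕ) : Fin n) = p₀ := by simpa using congrArg Prod.fst hie
          have h3 : ((i - 1 : ℕ) : Fin n) = ((0 : ℕ) : Fin n) := by
            rw [sub_eq_self] at h1; simpa using h1
          have := natCast_fin_inj (i := i - 1) (j := 0) (by omega) (by omega) h3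
          omega
        have hd3 : Disjoint (F₁ ∪ F₂) F₃ := by
          rw [Finset.disjoint_left]
          rintro a ha1 ha2
          simp only [hF₃, Finset.mem_singleton] at ha2
          subst ha2
          simp only [hF₁, hF₂, Finset.mem_union, Finset.mem_image, Finset.mem_Icc] at ha1
          rcases ha1 with ⟨j, hj, hje⟩ | ⟨i, hi, hie⟩
          · have h2 : j = 3 := by simpa using congrArg Prod.snd hje
            subst h2
            have h1 : p₀ = p₀ - (1 : Fin n) := by simpa using congrArg Prod.fst hje
            have h3 : ((1 : ℕ) : Fin n) = ((0 : ℕ) : Fin n) := by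
              rw [eq_sub_iff_add_eq] at h1
              have h4 : (1 : Fin n) = 0 := by
                have := h1
                rwa [add_comm, add_eq_right] at this
              simpa using h4
            have := natCast_fin_inj (i := 1) (j := 0) (by omega) (by omega) h3
            omega
          · have h2 : i = 3 := by simpa using congrArg Prod.snd hie
            subst h2
            have h1 : p₀ - ((2 : ℕ) : Fin n) = p₀ - (1 : Fin n) := by
              simpa using congrArg Prod.fst hie
            have h1' : p₀ - ((2 : ℕ) : Fin n) = p₀ - ((1 : ℕ) : Fin n) := by
              simpa using h1
            have h3 : ((2 : ℕ) : Fin n) = ((1 : ℕ) : Fin n) := by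
              have := congrArg (fun z => p₀ - z) (rfl : p₀ - ((2 : ℕ) : Fin n) = _)
              simpa using congrArg (fun z => -(z - p₀)) h1'
            have := natCast_fin_inj (i := 2) (j := 1) (by omega) (by omega) h3
            omega
        have hcard : (F₁ ∪ F₂ ∪ F₃).card = 2 * k := by
          rw [Finset.card_union_of_disjoint hd3, Finset.card_union_of_disjoint hd12,
            hc1, hc2, hF₃]
          simp
          omega
        calc 2 * k = (F₁ ∪ F₂ ∪ F₃).card := hcard.symm
          _ ≤ Gset.card := Finset.card_le_card hsub
      · -- p₀ ≠ p₁ : two k-families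
        set F₁ := (Finset.Icc 1 k).image (fun j => ((p₀, j) : Fin n × ℕ)) with hF₁
        set F₂ := (Finset.Icc 1 k).image
            (fun i => ((p₁ - ((i - 1 : ℕ) : Fin n), i) : Fin n × ℕ)) with hF₂
        have hsub : F₁ ∪ F₂ ⊆ Gset := by
          intro a ha
          simp only [hF₁, hF₂, Finset.mem_union, Finset.mem_image, Finset.mem_Icc] at ha
          rw [hGset, Finset.mem_filter, Finset.mem_product]
          rcases ha with ⟨j, hj, rfl⟩ | ⟨i, hi, rfl⟩
          · exact ⟨⟨P0a, Finset.mem_Icc.mpr ⟨hj.1, hj.2⟩⟩, P0b j hj.1 hj.2⟩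
          · refine ⟨⟨P1c (i - 1) (by omega), Finset.mem_Icc.mpr ⟨hi.1, hi.2⟩⟩, ?_⟩
            have : p₁ - ((i - 1 : ℕ) : Fin n) + ((i : ℕ) : Fin n) = p₁ + (1 : Fin n) := by
              rw [sub_nat_cast (by omega : 1 ≤ i)]; push_cast; ring
            rw [this]
            exact P1b
        have hc1 : F₁.card = k := by
          rw [hF₁, Finset.card_image_of_injOn (fun a _ b _ h => by
            simpa using congrArg Prod.snd h)]
          simp [Nat.card_Icc]
        have hc2 : F₂.card = k := by
          rw [hF₂, Finset.card_image_of_injOn (fun a _ b _ h => by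
            simpa using congrArg Prod.snd h)]
          simp [Nat.card_Icc]
        have hd12 : Disjoint F₁ F₂ := by
          rw [Finset.disjoint_left]
          rintro a ha1 ha2
          simp only [hF₁, hF₂, Finset.mem_image, Finset.mem_Icc] at ha1 ha2
          obtain ⟨j, hj, rfl⟩ := ha1
          obtain ⟨i, hi, hie⟩ := ha2
          have h2 : i = j := by simpa using congrArg Prod.snd hie
          subst h2
          have h1 : p₁ - ((i - 1 : ℕ) : Fin n) = p₀ := by simpa using congrArg Prod.fst hie
          rcases Nat.eq_or_lt_of_le hi.1 with h | h
          · rw [← h] at h1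
            simp at h1
            exact hpp h1.symm
          · -- i ≥ 2 : then p₀ + 1 = p₁ - (i-2) ∈ T, contradiction with P0b
            have hco : p₀ + ((1 : ℕ) : Fin n) = p₁ - ((i - 2 : ℕ) : Fin n) := by
              rw [← h1, sub_nat_cast (by omega : 1 ≤ i), sub_nat_cast (by omega : 2 ≤ i)]
              push_cast; ring
            have hmem : p₁ - ((i - 2 : ℕ) : Fin n) ∈ T := P1c (i - 2) (by omega)
            exact P0b 1 le_rfl (by omega) (by rw [hco]; exact hmem)
        have hcard : (F₁ ∪ F₂).card = 2 * k := by
          rw [Finset.card_union_of_disjoint hd12, hc1, hc2]; omega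
        calc 2 * k = (F₁ ∪ F₂).card := hcard.symm
          _ ≤ Gset.card := Finset.card_le_card hsub
    · -- no deep run : Ψ family plus extras at p₀
      push_neg at hrun
      have hrun' : ∀ s : Fin n, s ∈ T → ∃ j : ℕ, 1 ≤ j ∧ j ≤ k ∧ s + (j : Fin n) ∉ T := by
        intro s hs
        obtain ⟨j, h1, h2, h3⟩ := hrun s hs
        exact ⟨j, h1, h2, h3⟩
      set fd : Fin n → ℕ := fun s =>
        if h : ∃ j : ℕ, 1 ≤ j ∧ j ≤ k ∧ s + (j : Fin n) ∉ T then Nat.find h else 0 with hfd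
      have hfd_spec : ∀ s ∈ T, 1 ≤ fd s ∧ fd s ≤ k ∧ s + ((fd s : ℕ) : Fin n) ∉ T := by
        intro s hs
        have h := hrun' s hs
        rw [hfd]
        simp only [dif_pos h]
        exact Nat.find_spec h
      have hfd_p₀ : fd p₀ = 1 := by
        have h : ∃ j : ℕ, 1 ≤ j ∧ j ≤ k ∧ p₀ + (j : Fin n) ∉ T :=
          ⟨1, le_rfl, by omega, P0b 1 le_rfl (by omega)⟩
        rw [hfd]
        simp only [dif_pos h]
        have h1 := Nat.find_spec h
        have h2 := Nat.find_min' h ⟨le_rfl, by omega, P0b 1 le_rfl (by omega)⟩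
        omega
      set F₁ := T.image (fun s => ((s, fd s) : Fin n × ℕ)) with hF₁
      set F₂ := (Finset.Icc 2 k).image (fun j => ((p₀, j) : Fin n × ℕ)) with hF₂
      have hsub : F₁ ∪ F₂ ⊆ Gset := by
        intro a ha
        simp only [hF₁, hF₂, Finset.mem_union, Finset.mem_image, Finset.mem_Icc] at ha
        rw [hGset, Finset.mem_filter, Finset.mem_product]
        rcases ha with ⟨s, hs, rfl⟩ | ⟨j, hj, rfl⟩
        · obtain ⟨h1, h2, h3⟩ := hfd_spec s hs
          exact ⟨⟨hs, Finset.mem_Icc.mpr ⟨h1, h2⟩⟩, h3⟩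
        · exact ⟨⟨P0a, Finset.mem_Icc.mpr ⟨by omega, hj.2⟩⟩, P0b j (by omega) hj.2⟩
      have hc1 : F₁.card = T.card := by
        rw [hF₁, Finset.card_image_of_injOn (fun a _ b _ h => by
          simpa using congrArg Prod.fst h)]
      have hc2 : F₂.card = k - 1 := by
        rw [hF₂, Finset.card_image_of_injOn (fun a _ b _ h => by
          simpa using congrArg Prod.snd h)]
        simp [Nat.card_Icc]
      have hd12 : Disjoint F₁ F₂ := by
        rw [Finset.disjoint_left]
        rintro a ha1 ha2
        simp only [hF₁, hF₂, Finset.mem_image, Finset.mem_Icc] at ha1 ha2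
        obtain ⟨s, hs, rfl⟩ := ha1
        obtain ⟨j, hj, hje⟩ := ha2
        have h1 : p₀ = s := by simpa using congrArg Prod.fst hje
        subst h1
        have h2 : j = fd p₀ := by simpa using congrArg Prod.snd hje
        rw [hfd_p₀] at h2
        omega
      have hcard : (F₁ ∪ F₂).card = T.card + (k - 1) := by
        rw [Finset.card_union_of_disjoint hd12, hc1, hc2]
      have : 2 * k ≤ (F₁ ∪ F₂).card := by rw [hcard]; omega
      exact le_trans this (Finset.card_le_card hsub)
  · -- no deep gap : map the complement in
    push_neg at hdeep
    have hdeep' : ∀ x : Fin n, x ∉ T → ∃ j : ℕ, 1 ≤ j ∧ j ≤ k ∧ x - (j : Fin n) ∈ T := by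
      intro x hx
      obtain ⟨j, h1, h2, h3⟩ := hdeep x hx
      exact ⟨j, h1, h2, h3⟩
    set bd : Fin n → ℕ := fun x =>
      if h : ∃ j : ℕ, 1 ≤ j ∧ j ≤ k ∧ x - (j : Fin n) ∈ T then Nat.find h else 0 with hbd
    have hbd_spec : ∀ x : Fin n, x ∉ T → 1 ≤ bd x ∧ bd x ≤ k ∧ x - ((bd x : ℕ) : Fin n) ∈ T := by
      intro x hx
      have h := hdeep' x hx
      rw [hbd]
      simp only [dif_pos h]
      exact Nat.find_spec h
    have hcompl : (Finset.univ \ T).card = n - T.card := by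
      rw [Finset.card_sdiff_of_subset (Finset.subset_univ T)]
      simp
    have hinj : 2 * k ≤ ((Finset.univ \ T).image
        (fun x => ((x - ((bd x : ℕ) : Fin n), bd x) : Fin n × ℕ))).card := by
      rw [Finset.card_image_of_injOn]
      · omega
      · intro a ha b hb h
        have h2 : bd a = bd b := by simpa using congrArg Prod.snd h
        have h1 : a - ((bd a : ℕ) : Fin n) = b - ((bd b : ℕ) : Fin n) := by
          simpa using congrArg Prod.fst h
        rw [h2] at h1
        exact sub_left_injective h1
    refine le_trans hinj (Finset.card_le_card ?_)
    intro a ha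
    simp only [Finset.mem_image, Finset.mem_sdiff, Finset.mem_univ, true_and] at ha
    obtain ⟨x, hx, rfl⟩ := ha
    obtain ⟨h1, h2, h3⟩ := hbd_spec x hx
    rw [hGset, Finset.mem_filter, Finset.mem_product]
    refine ⟨⟨h3, Finset.mem_Icc.mpr ⟨h1, h2⟩⟩, ?_⟩
    rw [sub_add_cancel]
    exact hx


theorem arith_A (k n v e : ℕ) (hk : 3 ≤ k) (hn : 4 * k ≤ n) (hv3 : 3 ≤ v) (hvn : v ≤ n)
    (hcase : n - v < 2 * k) (he : e ≤ k * v) :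
    e * n ≤ (v - 2) * (k * n + (k + 1) * k ^ 2) := by
  obtain ⟨w, rfl⟩ : ∃ w, v = w + 3 := ⟨v - 3, by omega⟩
  obtain ⟨m, hm⟩ : ∃ m, n = w + 3 + m := ⟨n - (w + 3), by omega⟩
  subst hm
  have h1 : w + 3 - 2 = w + 1 := by omega
  rw [h1]
  have hm2k : m < 2 * k := by omega
  have hw : 2 * k - 2 ≤ w := by omega
  have hk12 : 12 * k ≤ (k + 1) * k ^ 2 := by nlinarith
  have hn6 : w + 3 + m ≤ 6 * (w + 1) := by omega
  have key : 2 * k * (w + 3 + m) ≤ (w + 1) * ((k + 1) * k ^ 2) := by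
    calc 2 * k * (w + 3 + m) ≤ 2 * k * (6 * (w + 1)) := Nat.mul_le_mul_left _ hn6
      _ = 12 * k * (w + 1) := by ring
      _ ≤ (k + 1) * k ^ 2 * (w + 1) := Nat.mul_le_mul_right _ hk12
      _ = (w + 1) * ((k + 1) * k ^ 2) := by ring
  calc e * (w + 3 + m) ≤ k * (w + 3) * (w + 3 + m) := Nat.mul_le_mul_right _ he
    _ = (w + 1) * (k * (w + 3 + m)) + 2 * k * (w + 3 + m) := by ring
    _ ≤ (w + 1) * (k * (w + 3 + m)) + (w + 1) * ((k + 1) * k ^ 2) := Nat.add_le_add_left key _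
    _ = (w + 1) * (k * (w + 3 + m) + (k + 1) * k ^ 2) := by ring

theorem arith_B (k n v e : ℕ) (hk : 3 ≤ k) (hv3 : 3 ≤ v) (he : e ≤ k * (v - 2)) :
    e * n ≤ (v - 2) * (k * n + (k + 1) * k ^ 2) := by
  calc e * n ≤ k * (v - 2) * n := Nat.mul_le_mul_right n he
    _ = (v - 2) * (k * n) := by ring
    _ ≤ (v - 2) * (k * n + (k + 1) * k ^ 2) := Nat.mul_le_mul_left _ (by omega)

theorem clique_small (k v e : ℕ) (hk : 3 ≤ k) (hv3 : 3 ≤ v) (hvk : v ≤ k + 1)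
    (he : 2 * e ≤ v * (v - 1)) : e ≤ k * (v - 2) := by
  obtain ⟨w, rfl⟩ : ∃ w, v = w + 3 := ⟨v - 3, by omega⟩
  have h1 : w + 3 - 1 = w + 2 := by omega
  have h2 : w + 3 - 2 = w + 1 := by omega
  rw [h1] at he; rw [h2]
  nlinarith [he, hk, hvk]

section Glue
variable {n k : ℕ} [NeZero n]

def gfun (u v : Fin n) : Fin n × ℕ :=
  if (v - u).val < (u - v).val then (u, (v - u).val)
  else if (u - v).val < (v - u).val then (v, (u - v).val)
  else if u ≤ v then (u, (v - u).val) else (v, (u - v).val)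

theorem gfun_symm (u v : Fin n) : gfun u v = gfun v u := by
  unfold gfun
  rcases lt_trichotomy (v - u).val (u - v).val with h | h | h
  · simp [h, not_lt.mpr h.le, h.ne']
  · simp only [h, lt_irrefl, if_false]
    rcases eq_or_ne u v with rfl | hne
    · simp
    · rcases le_total u v with hle | hle
      · simp [hle, (lt_of_le_of_ne hle hne).not_ge]
      · simp [hle, (lt_of_le_of_ne hle (Ne.symm hne)).not_ge]
  · simp [h, not_lt.mpr h.le, h.ne']

noncomputable def fedge : Sym2 (Fin n) → Fin n × ℕ := Sym2.lift ⟨gfun, gfun_symm⟩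

theorem gfun_snd (u v : Fin n) : (gfun u v).2 = min (v - u).val (u - v).val := by
  unfold gfun
  split_ifs <;> omega

theorem fedge_repr (e : Sym2 (Fin n)) :
    e = s((fedge e).1, (fedge e).1 + (((fedge e).2 : ℕ) : Fin n)) := by
  induction e with
  | _ u v =>
    have : fedge s(u, v) = gfun u v := rfl
    rw [this]
    unfold gfun
    split_ifs <;> simp [Fin.cast_val_eq_self, add_sub_cancel]

open Finset in
theorem edges_le_P (H : (graphPow (SimpleGraph.cycleGraph n) k).Subgraph)
    (hfe : H.edgeSet.Finite) (T : Finset (Fin n)) (hT : ∀ x, x ∈ H.verts ↔ x ∈ T) :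
    hfe.toFinset.card ≤ ((T ×ˢ Finset.Icc 1 k).filter
      (fun p : Fin n × ℕ => p.1 + ((p.2 : ℕ) : Fin n) ∈ T)).card := by
  classical
  apply Finset.card_le_card_of_injOn fedge
  · intro e he
    rw [Finset.mem_coe, Set.Finite.mem_toFinset] at he
    have hd : 1 ≤ (fedge e).2 ∧ (fedge e).2 ≤ k := by
      induction e with
      | _ u v =>
        have hadj : H.Adj u v := he
        have hGadj := hadj.adj_sub
        obtain ⟨hne, hreach, hdist⟩ := hGadj
        have hmin := dist_bound hreach hdist
        have h1 : (v - u) ≠ 0 := fun h => hne (by rwa [sub_eq_zero, eq_comm] at h)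
        have h2 : (u - v) ≠ 0 := fun h => hne (by rwa [sub_eq_zero] at h)
        have h1' : (v - u).val ≠ 0 := fun h => h1 (Fin.ext (by rw [h]; simp))
        have h2' : (u - v).val ≠ 0 := fun h => h2 (Fin.ext (by rw [h]; simp))
        have : fedge s(u, v) = gfun u v := rfl
        rw [this, gfun_snd]
        omega
    have hmem : s((fedge e).1, (fedge e).1 + (((fedge e).2 : ℕ) : Fin n)) ∈ H.edgeSet := by
      rw [← fedge_repr]; exact he
    have hadj : H.Adj (fedge e).1 ((fedge e).1 + (((fedge e).2 : ℕ) : Fin n)) := hmem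
    rw [Finset.mem_coe, Finset.mem_filter, Finset.mem_product]
    exact ⟨⟨(hT _).mp hadj.fst_mem, Finset.mem_Icc.mpr hd⟩, (hT _).mp hadj.snd_mem⟩
  · intro e he e' he' heq
    rw [fedge_repr e, fedge_repr e', heq]

end Glue

end Aux


open scoped Fin.NatCast Fin.CommRing in
/-- Suppose that `n ≥ 4k` and `k ≥ 3`.  Then
`d₂^max (C_n^k) ≤ k + (k+1)k²/n`, i.e. every subgraph `H` of `C_n^k` with at least 3
vertices satisfies `e_H/(v_H - 2) ≤ k + (k+1)k²/n`. -/
theorem two_density_cycle_power (k n : ℕ) (hk : 3 ≤ k) (hn : 4 * k ≤ n) :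
    ∀ H : (graphPow (SimpleGraph.cycleGraph n) k).Subgraph, 3 ≤ H.verts.ncard →
      (H.edgeSet.ncard : ℝ) / ((H.verts.ncard : ℝ) - 2)
        ≤ (k : ℝ) + ((k : ℝ) + 1) * (k : ℝ) ^ 2 / (n : ℝ) := by
  classical
  haveI : NeZero n := ⟨by omega⟩
  intro H hv3
  have hfv : H.verts.Finite := Set.toFinite _
  have hfe : H.edgeSet.Finite := Set.toFinite _
  obtain ⟨T, hTT⟩ : ∃ T : Finset (Fin n), T = hfv.toFinset := ⟨_, rfl⟩
  have hT : ∀ x, x ∈ H.verts ↔ x ∈ T := fun x => by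
    rw [hTT]; exact (Set.Finite.mem_toFinset hfv).symm
  have hvcard : H.verts.ncard = T.card := by
    rw [hTT]; exact Set.ncard_eq_toFinset_card H.verts hfv
  have hecard : H.edgeSet.ncard = hfe.toFinset.card :=
    Set.ncard_eq_toFinset_card H.edgeSet hfe
  obtain ⟨e, hee⟩ : ∃ e : ℕ, e = hfe.toFinset.card := ⟨_, rfl⟩
  obtain ⟨v, hvv⟩ : ∃ v : ℕ, v = T.card := ⟨_, rfl⟩
  have hv3' : 3 ≤ v := by rw [hvv, ← hvcard]; exact hv3
  have hvn : v ≤ n := by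
    rw [hvv]
    simpa using Finset.card_le_card (Finset.subset_univ T)
  have heP : e ≤ ((T ×ˢ Finset.Icc 1 k).filter
      (fun p : Fin n × ℕ => p.1 + ((p.2 : ℕ) : Fin n) ∈ T)).card := by
    rw [hee]; exact edges_le_P H hfe T hT
  have hbase : (T ×ˢ Finset.Icc 1 k).card = v * k := by
    rw [Finset.card_product, Nat.card_Icc, hvv]
    norm_num
  have hnat : e * n ≤ (v - 2) * (k * n + (k + 1) * k ^ 2) := by
    by_cases hcase : n - v < 2 * k
    · -- large v : trivial degree bound
      have hekv : e ≤ k * v := by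
        have h1 : ((T ×ˢ Finset.Icc 1 k).filter
            (fun p : Fin n × ℕ => p.1 + ((p.2 : ℕ) : Fin n) ∈ T)).card
            ≤ (T ×ˢ Finset.Icc 1 k).card := Finset.card_filter_le _ _
        rw [hbase] at h1
        calc e ≤ v * k := le_trans heP h1
          _ = k * v := Nat.mul_comm v k
      exact arith_A k n v e hk hn hv3' hvn hcase hekv
    · push_neg at hcase
      have heB : e ≤ k * (v - 2) := by
        by_cases hsmall : v ≤ k + 1
        · -- small v : clique bound
          have hch : e ≤ v.choose 2 := by
            rw [hee, hvv]
            exact edge_card_le_choose H hfe T (fun x hx => (hT x).mp hx)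
          have h2e : 2 * e ≤ v * (v - 1) := by
            have hcc := Nat.choose_two_right v
            obtain ⟨M, hM⟩ : ∃ M : ℕ, M = v * (v - 1) := ⟨_, rfl⟩
            rw [← hM] at hcc ⊢
            omega
          exact clique_small k v e hk hv3' hsmall h2e
        · -- main case : core bound
          push_neg at hsmall
          have hPG : ((T ×ˢ Finset.Icc 1 k).filter
                (fun p : Fin n × ℕ => p.1 + ((p.2 : ℕ) : Fin n) ∈ T)).card
              + ((T ×ˢ Finset.Icc 1 k).filter
                (fun p : Fin n × ℕ => p.1 + ((p.2 : ℕ) : Fin n) ∉ T)).card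
              = v * k := by
            rw [Finset.card_filter_add_card_filter_not, hbase]
          have hG := core_bound hk hn T (by omega) (by rw [← hvv]; omega)
          have hkv : k * (v - 2) + 2 * k = v * k := by
            have h2 : v - 2 + 2 = v := by omega
            calc k * (v - 2) + 2 * k = k * ((v - 2) + 2) := by ring
              _ = v * k := by rw [h2]; ring
          linarith
      exact arith_B k n v e hk hv3' heB
  -- convert to the real inequality
  rw [hecard, hvcard, ← hee, ← hvv]
  have hv2 : (0:ℝ) < (v:ℝ) - 2 := by
    have : (3:ℝ) ≤ (v:ℝ) := by exact_mod_cast hv3'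
    linarith
  have hn0 : (0:ℝ) < (n:ℝ) := by exact_mod_cast (by omega : 0 < n)
  rw [div_le_iff₀ hv2]
  have hre : ((k:ℝ) + ((k:ℝ) + 1) * (k:ℝ) ^ 2 / n) = ((k * n + (k + 1) * k ^ 2 : ℕ) : ℝ) / n := by
    push_cast
    field_simp
  rw [hre, div_mul_eq_mul_div, le_div_iff₀ hn0]
  have hcast2 : ((v : ℝ) - 2) = ((v - 2 : ℕ) : ℝ) := by
    have h2 : (2:ℕ) ≤ v := by omega
    push_cast [h2]
    ring
  rw [hcast2]
  calc (e:ℝ) * n = ((e * n : ℕ) : ℝ) := by push_cast; ring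
    _ ≤ (((v - 2) * (k * n + (k + 1) * k ^ 2) : ℕ) : ℝ) := by exact_mod_cast hnat
    _ = ((k * n + (k + 1) * k ^ 2 : ℕ) : ℝ) * ((v - 2 : ℕ) : ℝ) := by push_cast; ring
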